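/- Let a₀ ≠ 0, K > 0, φ₀' ∈ ℝ. Define a(t) = sqrt(a₀² + t²), φ(t) = φ₀' + (1/K)·log(1 + t²/a₀²), V(x) = (4·exp(−K(x − φ₀')) − exp(−2K(x − φ₀')))/(K² a₀²), H(t) = a'(t)/a(t), ρ(t) = φ'(t)²/2 + V(φ(t)), p(t) = φ'(t)²/2 − V(φ(t)). Then for all t ∈ ℝ: V(φ(t)) = (4t² + 3a₀²)/(K²(a₀² + t²)²), and both Einstein equations hold with curvature k = 1 and no matter (D = 0): H(t)² + 1/a(t)² = (K²/3) ρ(t) and a''(t)/a(t) = −(K²/6)(ρ(t) + 3 p(t)). -/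

import Mathlib

open Real

/-- The Özer–Taha solution with a(t) = √(a₀² + t²):
V(φ(t)) = (4t² + 3a₀²)/(K²(a₀² + t²)²) and both Einstein equations hold
with k = 1 and no matter. -/
theorem ozer_taha_solution_one
    (a₀ K φ₀' : ℝ) (ha₀ : a₀ ≠ 0) (hK : 0 < K)
    (a φ V H ρ p : ℝ → ℝ)
    (ha : a = fun t => Real.sqrt (a₀ ^ 2 + t ^ 2))
    (hφ : φ = fun t => φ₀' + 1 / K * Real.log (1 + t ^ 2 / a₀ ^ 2))
    (hV : V = fun x => (4 * Real.exp (-K * (x - φ₀'))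
      - Real.exp (-2 * K * (x - φ₀'))) / (K ^ 2 * a₀ ^ 2))
    (hH : H = fun t => deriv a t / a t)
    (hρ : ρ = fun t => (deriv φ t) ^ 2 / 2 + V (φ t))
    (hp : p = fun t => (deriv φ t) ^ 2 / 2 - V (φ t)) :
    ∀ t : ℝ,
      V (φ t) = (4 * t ^ 2 + 3 * a₀ ^ 2) / (K ^ 2 * (a₀ ^ 2 + t ^ 2) ^ 2) ∧
      H t ^ 2 + 1 / a t ^ 2 = K ^ 2 / 3 * ρ t ∧
      deriv (deriv a) t / a t = -(K ^ 2 / 6) * (ρ t + 3 * p t) := by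
  have hs : ∀ t : ℝ, 0 < a₀ ^ 2 + t ^ 2 := fun t => by positivity
  have hsq : ∀ t : ℝ, 0 < Real.sqrt (a₀ ^ 2 + t ^ 2) := fun t =>
    Real.sqrt_pos.mpr (hs t)
  have hsq2 : ∀ t : ℝ, Real.sqrt (a₀ ^ 2 + t ^ 2) ^ 2 = a₀ ^ 2 + t ^ 2 :=
    fun t => Real.sq_sqrt (hs t).le
  -- derivative of a
  have hda : ∀ t : ℝ, HasDerivAt (fun t => Real.sqrt (a₀ ^ 2 + t ^ 2))
      (t / Real.sqrt (a₀ ^ 2 + t ^ 2)) t := by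
    intro t
    have h1 : HasDerivAt (fun t : ℝ => a₀ ^ 2 + t ^ 2) (2 * t) t := by
      simpa using (hasDerivAt_pow 2 t).const_add (a₀ ^ 2)
    have h2 := (Real.hasDerivAt_sqrt (hs t).ne').comp t h1
    exact h2.congr_deriv (by rw [div_mul_eq_mul_div, one_mul, mul_div_mul_left _ _ two_ne_zero])
  have hda' : deriv a = fun t => t / Real.sqrt (a₀ ^ 2 + t ^ 2) := by
    funext t
    rw [ha]
    exact (hda t).deriv
  -- second derivative of a
  have hdda : ∀ t : ℝ, deriv (deriv a) t
      = a₀ ^ 2 / ((a₀ ^ 2 + t ^ 2) * Real.sqrt (a₀ ^ 2 + t ^ 2)) := by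
    intro t
    rw [hda']
    have h1 : HasDerivAt (fun t : ℝ => t / Real.sqrt (a₀ ^ 2 + t ^ 2))
        ((1 * Real.sqrt (a₀ ^ 2 + t ^ 2) - t * (t / Real.sqrt (a₀ ^ 2 + t ^ 2)))
          / Real.sqrt (a₀ ^ 2 + t ^ 2) ^ 2) t :=
      (hasDerivAt_id t).div (hda t) (hsq t).ne'
    rw [h1.deriv]
    have h2 := hsq2 t
    field_simp
    nlinarith [hsq2 t, hsq t]
  -- derivative of φ
  have hdφ : ∀ t : ℝ, deriv φ t = 2 * t / (K * (a₀ ^ 2 + t ^ 2)) := by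
    intro t
    have hpos : (0:ℝ) < 1 + t ^ 2 / a₀ ^ 2 := by positivity
    have h1 : HasDerivAt (fun t : ℝ => 1 + t ^ 2 / a₀ ^ 2) (2 * t / a₀ ^ 2) t := by
      have := ((hasDerivAt_pow 2 t).div_const (a₀ ^ 2)).const_add (1:ℝ)
      simpa using this
    have h2 := (Real.hasDerivAt_log hpos.ne').comp t h1
    have h3 : HasDerivAt (fun t : ℝ => φ₀' + 1 / K * Real.log (1 + t ^ 2 / a₀ ^ 2))
        (1 / K * ((1 + t ^ 2 / a₀ ^ 2)⁻¹ * (2 * t / a₀ ^ 2))) t := by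
      simpa [Function.comp] using (h2.const_mul (1 / K)).const_add φ₀'
    rw [hφ]
    rw [h3.deriv]
    have ha2 : a₀ ^ 2 ≠ 0 := pow_ne_zero 2 ha₀
    field_simp
  -- value of V ∘ φ
  have hVφ : ∀ t : ℝ, V (φ t)
      = (4 * t ^ 2 + 3 * a₀ ^ 2) / (K ^ 2 * (a₀ ^ 2 + t ^ 2) ^ 2) := by
    intro t
    have hpos : (0:ℝ) < 1 + t ^ 2 / a₀ ^ 2 := by positivity
    have ha2 : a₀ ^ 2 ≠ 0 := pow_ne_zero 2 ha₀
    have harg : φ t - φ₀' = 1 / K * Real.log (1 + t ^ 2 / a₀ ^ 2) := by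
      rw [hφ]; ring
    have he1 : Real.exp (-K * (φ t - φ₀')) = (1 + t ^ 2 / a₀ ^ 2)⁻¹ := by
      rw [harg]
      have : -K * (1 / K * Real.log (1 + t ^ 2 / a₀ ^ 2))
          = -Real.log (1 + t ^ 2 / a₀ ^ 2) := by
        field_simp
      rw [this, Real.exp_neg, Real.exp_log hpos]
    have he2 : Real.exp (-2 * K * (φ t - φ₀')) = ((1 + t ^ 2 / a₀ ^ 2)⁻¹) ^ 2 := by
      rw [harg]
      have : -2 * K * (1 / K * Real.log (1 + t ^ 2 / a₀ ^ 2))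
          = -(2 * Real.log (1 + t ^ 2 / a₀ ^ 2)) := by
        field_simp
      rw [this, Real.exp_neg,
        show (2:ℝ) * Real.log (1 + t ^ 2 / a₀ ^ 2)
          = Real.log (1 + t ^ 2 / a₀ ^ 2) + Real.log (1 + t ^ 2 / a₀ ^ 2) by ring,
        Real.exp_add, Real.exp_log hpos, mul_inv, sq]
      ring
    rw [hV]
    simp only
    rw [he1, he2]
    have hK2 : K ≠ 0 := hK.ne'
    have hspos := hs t
    field_simp
    ring
  intro t
  refine ⟨hVφ t, ?_, ?_⟩
  · simp only [hH, hρ, hda', ha]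
    rw [(hda t).deriv, hVφ t, hdφ t, div_div, Real.mul_self_sqrt (hs t).le, hsq2 t]
    have hK2 : K ≠ 0 := hK.ne'
    have hspos := (hs t).ne'
    field_simp
    ring
  · rw [hdda t]
    simp only [hρ, hp, ha]
    rw [hVφ t, hdφ t, div_div, mul_assoc, Real.mul_self_sqrt (hs t).le]
    have hK2 : K ≠ 0 := hK.ne'
    have hspos := (hs t).ne'
    field_simp
    ring
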